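/- Let φ : ℝ^k × S^k → ℝ be continuous and suppose that for each fixed x ∈ ℝ^k the map u ↦ φ(x,u) is convex on S^k. Let φ*(x) = min_{u ∈ S^k} φ(x,u). Then for every δ > 0 and every compact set A ⊂ ℝ^k there exists a Lipschitz continuous function h' : ℝ^k → S^k such that φ(x, h'(x)) ≤ φ*(x) + δ for every x ∈ A. -/

import Mathlib

open Set

noncomputable def l1 {k : ℕ} (x : Fin k → ℝ) : ℝ := ∑ i, |x i|

/-- The standard simplex S^k in ℝ^k. -/
def Sk (k : ℕ) : Set (Fin k → ℝ) := {u | (∀ i, 0 ≤ u i) ∧ ∑ i, u i = 1}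

lemma abs_min_sub_min_le_abs' (a b c : ℝ) : |min a c - min b c| ≤ |a - b| := by
  have h := abs_max_sub_max_le_abs (-a) (-b) (-c)
  simp only [max_neg_neg] at h
  have e1 : -(a ⊓ c) - -(b ⊓ c) = -(min a c - min b c) := by ring
  have e2 : -a - -b = -(a - b) := by ring
  rw [e1, e2, abs_neg, abs_neg] at h
  exact h

lemma l1_nonneg {k : ℕ} (v : Fin k → ℝ) : 0 ≤ l1 v :=
  Finset.sum_nonneg fun _ _ => abs_nonneg _

lemma dist_le_l1 {k : ℕ} (x y : Fin k → ℝ) : dist x y ≤ l1 (x - y) := by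
  rw [dist_eq_norm]
  refine (pi_norm_le_iff_of_nonneg (l1_nonneg _)).2 fun i => ?_
  simpa [l1] using Finset.single_le_sum (f := fun j => |(x - y) j|)
    (fun j _ => abs_nonneg _) (Finset.mem_univ i)

theorem stmt_10 {k : ℕ} (hk : 1 ≤ k) (φ : (Fin k → ℝ) → (Fin k → ℝ) → ℝ)
    (hφ : ContinuousOn (fun p : (Fin k → ℝ) × (Fin k → ℝ) => φ p.1 p.2)
      (Set.univ ×ˢ Sk k))
    (hconv : ∀ x, ConvexOn ℝ (Sk k) (φ x))
    (δ : ℝ) (hδ : 0 < δ) (A : Set (Fin k → ℝ)) (hA : IsCompact A) :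
    ∃ h' : (Fin k → ℝ) → (Fin k → ℝ),
      (∃ c : ℝ, ∀ x y, l1 (h' x - h' y) ≤ c * l1 (x - y)) ∧
      (∀ x, h' x ∈ Sk k) ∧
      ∀ x ∈ A, φ x (h' x) ≤ sInf ((φ x) '' Sk k) + δ := by
  classical
  have hScomp : IsCompact (Sk k) := isCompact_stdSimplex ℝ (Fin k)
  have hk0 : (0:ℝ) < k := by exact_mod_cast Nat.lt_of_lt_of_le Nat.zero_lt_one hk
  set u₀ : Fin k → ℝ := fun _ => (k:ℝ)⁻¹ with hu₀def
  have hu₀ : u₀ ∈ Sk k := by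
    refine ⟨fun i => by positivity, ?_⟩
    simp only [u₀, Finset.sum_const, Finset.card_univ, Fintype.card_fin, nsmul_eq_mul]
    exact mul_inv_cancel₀ (ne_of_gt hk0)
  have hSne : (Sk k).Nonempty := ⟨u₀, hu₀⟩
  have hcx : ∀ x, ContinuousOn (φ x) (Sk k) := by
    intro x
    have h1 : Continuous (fun u : Fin k → ℝ => ((x, u) : (Fin k → ℝ) × (Fin k → ℝ))) :=
      Continuous.prodMk_right x
    exact hφ.comp h1.continuousOn (fun v hv => ⟨mem_univ _, hv⟩)
  have himne : ∀ x, (φ x '' Sk k).Nonempty := fun x => hSne.image _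
  rcases A.eq_empty_or_nonempty with hAe | hAne
  · exact ⟨fun _ => u₀, ⟨0, fun x y => by simp [l1]⟩, fun _ => hu₀, by simp [hAe]⟩
  -- uniform continuity
  set K := Metric.cthickening 1 A with hKdef
  have hKA : A ⊆ K := Metric.self_subset_cthickening A
  have hKc : IsCompact K := hA.cthickening
  have hC : IsCompact (K ×ˢ Sk k) := hKc.prod hScomp
  have hφC : ContinuousOn (fun p : (Fin k → ℝ) × (Fin k → ℝ) => φ p.1 p.2) (K ×ˢ Sk k) :=
    hφ.mono (prod_mono (subset_univ K) subset_rfl)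
  have hUC := hC.uniformContinuousOn_of_continuous hφC
  rw [Metric.uniformContinuousOn_iff] at hUC
  obtain ⟨ε', hε', hUC⟩ := hUC (δ/2) (by positivity)
  set ε := min ε' 1 with hεdef
  have hε : 0 < ε := lt_min hε' one_pos
  have hε1 : ε ≤ 1 := min_le_right _ _
  have hεε' : ε ≤ ε' := min_le_left _ _
  have hkey : ∀ a ∈ A, ∀ u ∈ Sk k, ∀ x, dist x a < ε → |φ x u - φ a u| < δ/2 := by
    intro a ha u hu x hx
    have hxK : x ∈ K := Metric.mem_cthickening_of_dist_le x a 1 A ha (le_trans hx.le hε1)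
    have hd : dist ((x,u) : _ × _) ((a,u) : _ × _) < ε' := by
      rw [Prod.dist_eq]
      simp only [dist_self]
      rw [max_eq_left dist_nonneg]
      exact lt_of_lt_of_le hx hεε'
    have := hUC (x,u) ⟨hxK, hu⟩ (a,u) ⟨hKA ha, hu⟩ hd
    simpa [Real.dist_eq] using this
  -- selection of near-minimizers
  have hsel : ∀ a ∈ A, ∃ u ∈ Sk k, ∀ x, dist x a < ε → φ x u ≤ sInf (φ x '' Sk k) + δ := by
    intro a ha
    obtain ⟨ua, huaS, huamin⟩ := hScomp.exists_isMinOn hSne (hcx a)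
    refine ⟨ua, huaS, fun x hx => ?_⟩
    have h1 : φ x ua - φ a ua < δ/2 := (abs_lt.1 (hkey a ha ua huaS x hx)).2
    have h2 : φ a ua - δ/2 ≤ sInf (φ x '' Sk k) := by
      apply le_csInf (himne x)
      rintro b ⟨v, hv, rfl⟩
      have h3 := (abs_lt.1 (hkey a ha v hv x hx)).1
      have h4 : φ a ua ≤ φ a v := (isMinOn_iff.1 huamin) v hv
      linarith
    linarith
  choose! u hu huP using hsel
  -- finite cover
  obtain ⟨s', hs'A, hs'fin, hcover⟩ := hA.elim_finite_subcover_image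
    (fun (a : Fin k → ℝ) (_ : a ∈ A) => Metric.isOpen_ball (x := a) (ε := ε/4))
    (fun x hx => Set.mem_biUnion hx (Metric.mem_ball_self (by positivity)))
  set t : Finset (Fin k → ℝ) := hs'fin.toFinset with htdef
  have htA : ∀ a ∈ t, a ∈ A := fun a ha => hs'A (hs'fin.mem_toFinset.1 ha)
  have hcov : ∀ x ∈ A, ∃ a ∈ t, dist x a < ε/4 := by
    intro x hx
    obtain ⟨a, ha, hxa⟩ := mem_iUnion₂.1 (hcover hx)
    exact ⟨a, hs'fin.mem_toFinset.2 ha, by simpa [Metric.mem_ball] using hxa⟩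
  -- partition of unity ingredients
  set ψ : (Fin k → ℝ) → (Fin k → ℝ) → ℝ := fun a x => max (ε/2 - dist x a) 0 with hψdef
  set ψ₀ : (Fin k → ℝ) → ℝ := fun x => min (Metric.infDist x A) 1 with hψ₀def
  set g : (Fin k → ℝ) → ℝ := fun x => (∑ a ∈ t, ψ a x) + ψ₀ x with hgdef
  have hψnn : ∀ a x, 0 ≤ ψ a x := fun a x => le_max_right _ _
  have hψ₀nn : ∀ x, 0 ≤ ψ₀ x := fun x => le_min Metric.infDist_nonneg zero_le_one
  have hψlip : ∀ a x y, |ψ a x - ψ a y| ≤ dist x y := by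
    intro a x y
    calc |ψ a x - ψ a y| ≤ |(ε/2 - dist x a) - (ε/2 - dist y a)| :=
          abs_max_sub_max_le_abs _ _ _
      _ = |dist y a - dist x a| := by ring_nf
      _ ≤ dist y x := abs_dist_sub_le _ _ _
      _ = dist x y := dist_comm _ _
  have hψ₀lip : ∀ x y, |ψ₀ x - ψ₀ y| ≤ dist x y := by
    intro x y
    refine le_trans (abs_min_sub_min_le_abs' _ _ _) ?_
    rw [abs_sub_le_iff]
    constructor
    · linarith [Metric.infDist_le_infDist_add_dist (x := x) (y := y) (s := A)]
    · linarith [Metric.infDist_le_infDist_add_dist (x := y) (y := x) (s := A),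
        dist_comm x y]
  have hg_lb : ∀ x, ε/8 ≤ g x := by
    intro x
    by_cases hcase : Metric.infDist x A < ε/8
    · obtain ⟨a', ha', hda'⟩ := (Metric.infDist_lt_iff hAne).1 hcase
      obtain ⟨a, hat, ha'a⟩ := hcov a' ha'
      have hdxa : dist x a < 3*ε/8 := by
        calc dist x a ≤ dist x a' + dist a' a := dist_triangle _ _ _
          _ < ε/8 + ε/4 := add_lt_add hda' ha'a
          _ = 3*ε/8 := by ring
      have h1 : ε/8 ≤ ψ a x := le_max_of_le_left (by linarith)
      have h2 : ψ a x ≤ ∑ b ∈ t, ψ b x := Finset.single_le_sum (fun b _ => hψnn b x) hat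
      have h3 := hψ₀nn x
      simp only [hgdef]; linarith
    · push_neg at hcase
      have h1 : ε/8 ≤ ψ₀ x := le_min hcase (by linarith)
      have h2 : (0:ℝ) ≤ ∑ b ∈ t, ψ b x := Finset.sum_nonneg fun b _ => hψnn b x
      simp only [hgdef]; linarith
  have hg_pos : ∀ x, 0 < g x := fun x => lt_of_lt_of_le (by positivity) (hg_lb x)
  set L : ℝ := (t.card : ℝ) + 1 with hLdef
  have hg_lip : ∀ x y, |g x - g y| ≤ L * dist x y := by
    intro x y
    have e : g x - g y = (∑ a ∈ t, (ψ a x - ψ a y)) + (ψ₀ x - ψ₀ y) := by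
      simp only [hgdef, Finset.sum_sub_distrib]; ring
    rw [e]
    calc |(∑ a ∈ t, (ψ a x - ψ a y)) + (ψ₀ x - ψ₀ y)|
        ≤ |∑ a ∈ t, (ψ a x - ψ a y)| + |ψ₀ x - ψ₀ y| := abs_add_le _ _
      _ ≤ (∑ a ∈ t, |ψ a x - ψ a y|) + dist x y :=
          add_le_add (Finset.abs_sum_le_sum_abs _ _) (hψ₀lip x y)
      _ ≤ (∑ _a ∈ t, dist x y) + dist x y :=
          add_le_add_left (Finset.sum_le_sum fun a _ => hψlip a x y) _
      _ = L * dist x y := by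
          simp only [Finset.sum_const, nsmul_eq_mul, hLdef]; ring
  have hcoord : ∀ v ∈ Sk k, ∀ i, 0 ≤ v i ∧ v i ≤ 1 := by
    intro v hv i
    refine ⟨hv.1 i, ?_⟩
    calc v i ≤ ∑ j, v j := Finset.single_le_sum (fun j _ => hv.1 j) (Finset.mem_univ i)
      _ = 1 := hv.2
  have hut : ∀ a ∈ t, u a ∈ Sk k := fun a ha => hu a (htA a ha)
  -- numerator
  set N : (Fin k → ℝ) → Fin k → ℝ :=
    fun x i => (∑ a ∈ t, ψ a x * u a i) + ψ₀ x * u₀ i with hNdef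
  have hNnn : ∀ x i, 0 ≤ N x i := by
    intro x i
    refine add_nonneg (Finset.sum_nonneg fun a ha => mul_nonneg (hψnn a x)
      ((hut a ha).1 i)) (mul_nonneg (hψ₀nn x) (hu₀.1 i))
  have hNle : ∀ x i, N x i ≤ g x := by
    intro x i
    simp only [hNdef, hgdef]
    refine add_le_add (Finset.sum_le_sum fun a ha => ?_) ?_
    · calc ψ a x * u a i ≤ ψ a x * 1 := by
            exact mul_le_mul_of_nonneg_left ((hcoord _ (hut a ha) i).2) (hψnn a x)
        _ = ψ a x := mul_one _
    · calc ψ₀ x * u₀ i ≤ ψ₀ x * 1 := by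
            exact mul_le_mul_of_nonneg_left ((hcoord _ hu₀ i).2) (hψ₀nn x)
        _ = ψ₀ x := mul_one _
  have hNlip : ∀ x y i, |N x i - N y i| ≤ L * dist x y := by
    intro x y i
    have e : N x i - N y i =
        (∑ a ∈ t, (ψ a x - ψ a y) * u a i) + (ψ₀ x - ψ₀ y) * u₀ i := by
      simp only [hNdef, Finset.sum_sub_distrib, sub_mul]; ring
    rw [e]
    calc |(∑ a ∈ t, (ψ a x - ψ a y) * u a i) + (ψ₀ x - ψ₀ y) * u₀ i|
        ≤ |∑ a ∈ t, (ψ a x - ψ a y) * u a i| + |(ψ₀ x - ψ₀ y) * u₀ i| := abs_add_le _ _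
      _ ≤ (∑ a ∈ t, |(ψ a x - ψ a y) * u a i|) + |ψ₀ x - ψ₀ y| * |u₀ i| :=
          add_le_add (Finset.abs_sum_le_sum_abs _ _) (le_of_eq (abs_mul _ _))
      _ ≤ (∑ _a ∈ t, dist x y) + dist x y := by
          refine add_le_add (Finset.sum_le_sum fun a ha => ?_) ?_
          · rw [abs_mul]
            calc |ψ a x - ψ a y| * |u a i| ≤ dist x y * 1 := by
                  refine mul_le_mul (hψlip a x y) ?_ (abs_nonneg _) dist_nonneg
                  rw [abs_of_nonneg ((hut a ha).1 i)]
                  exact (hcoord _ (hut a ha) i).2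
              _ = dist x y := mul_one _
          · calc |ψ₀ x - ψ₀ y| * |u₀ i| ≤ dist x y * 1 := by
                  refine mul_le_mul (hψ₀lip x y) ?_ (abs_nonneg _) dist_nonneg
                  rw [abs_of_nonneg (hu₀.1 i)]
                  exact (hcoord _ hu₀ i).2
              _ = dist x y := mul_one _
      _ = L * dist x y := by
          simp only [Finset.sum_const, nsmul_eq_mul, hLdef]; ring
  -- the function
  set h' : (Fin k → ℝ) → (Fin k → ℝ) := fun x i => N x i / g x with hh'def
  have hmem : ∀ x, h' x ∈ Sk k := by
    intro x
    constructor
    · intro i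
      exact div_nonneg (hNnn x i) (hg_pos x).le
    · have hNsum : ∑ i, N x i = g x := by
        simp only [hNdef, hgdef, Finset.sum_add_distrib]
        congr 1
        · rw [Finset.sum_comm]
          refine Finset.sum_congr rfl fun a ha => ?_
          rw [← Finset.mul_sum, (hut a ha).2, mul_one]
        · rw [← Finset.mul_sum, hu₀.2, mul_one]
      simp only [hh'def]
      rw [← Finset.sum_div, hNsum, div_self (hg_pos x).ne']
  -- Lipschitz
  have hlip : ∀ x y i, |h' x i - h' y i| ≤ (2 * L / (ε/8)) * dist x y := by
    intro x y i
    have hgx := hg_pos x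
    have hgy := hg_pos y
    have e : h' x i - h' y i =
        ((N x i - N y i) * g y + N y i * (g y - g x)) / (g x * g y) := by
      simp only [hh'def]
      field_simp
      ring
    rw [e, abs_div, abs_of_pos (mul_pos hgx hgy)]
    have hnum : |(N x i - N y i) * g y + N y i * (g y - g x)| ≤
        2 * L * dist x y * g y := by
      calc |(N x i - N y i) * g y + N y i * (g y - g x)|
          ≤ |(N x i - N y i) * g y| + |N y i * (g y - g x)| := abs_add_le _ _
        _ = |N x i - N y i| * g y + N y i * |g y - g x| := by
            rw [abs_mul, abs_mul, abs_of_pos hgy, abs_of_nonneg (hNnn y i)]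
        _ ≤ (L * dist x y) * g y + g y * (L * dist x y) := by
            refine add_le_add (mul_le_mul_of_nonneg_right (hNlip x y i) hgy.le) ?_
            refine mul_le_mul (hNle y i) ?_ (abs_nonneg _) hgy.le
            have := hg_lip x y
            rw [abs_sub_comm] at this
            exact this
        _ = 2 * L * dist x y * g y := by ring
    calc |(N x i - N y i) * g y + N y i * (g y - g x)| / (g x * g y)
        ≤ (2 * L * dist x y * g y) / (g x * g y) := by
          exact div_le_div_of_nonneg_right hnum (mul_pos hgx hgy).le
      _ = (2 * L * dist x y) / g x := by
          rw [mul_comm (g x) (g y), ← div_div, mul_div_assoc, div_self hgy.ne', mul_one]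
      _ ≤ (2 * L * dist x y) / (ε/8) := by
          apply div_le_div_of_nonneg_left ?_ (by positivity) (hg_lb x)
          positivity
      _ = (2 * L / (ε/8)) * dist x y := by ring
  refine ⟨h', ⟨(k : ℝ) * (2 * L / (ε/8)), fun x y => ?_⟩, hmem, ?_⟩
  · have hC0 : (0:ℝ) ≤ 2 * L / (ε/8) := by positivity
    calc l1 (h' x - h' y) = ∑ i, |h' x i - h' y i| := by
          simp [l1]
      _ ≤ ∑ _i : Fin k, (2 * L / (ε/8)) * dist x y :=
          Finset.sum_le_sum fun i _ => hlip x y i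
      _ = (k : ℝ) * ((2 * L / (ε/8)) * dist x y) := by
          simp [Finset.sum_const, Finset.card_univ]
      _ ≤ (k : ℝ) * ((2 * L / (ε/8)) * l1 (x - y)) := by
          refine mul_le_mul_of_nonneg_left (mul_le_mul_of_nonneg_left (dist_le_l1 x y) hC0)
            (by positivity)
      _ = (k : ℝ) * (2 * L / (ε/8)) * l1 (x - y) := by ring
  · intro x hx
    have hψ₀x : ψ₀ x = 0 := by
      simp only [hψ₀def]
      rw [Metric.infDist_zero_of_mem hx]
      simp
    set w : (Fin k → ℝ) → ℝ := fun a => ψ a x / g x with hwdef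
    have hwnn : ∀ a ∈ t, 0 ≤ w a := fun a _ => div_nonneg (hψnn a x) (hg_pos x).le
    have hwsum : ∑ a ∈ t, w a = 1 := by
      simp only [hwdef]
      rw [← Finset.sum_div]
      have : ∑ a ∈ t, ψ a x = g x := by
        simp only [hgdef, hψ₀x, add_zero]
      rw [this, div_self (hg_pos x).ne']
    have hrep : h' x = ∑ a ∈ t, w a • u a := by
      funext i
      rw [Finset.sum_apply]
      simp only [Pi.smul_apply, smul_eq_mul, hwdef]
      simp only [hh'def, hNdef, hψ₀x, zero_mul, add_zero]
      rw [Finset.sum_div]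
      refine Finset.sum_congr rfl fun a _ => by ring
    have hjensen := (hconv x).map_sum_le hwnn hwsum hut
    rw [← hrep] at hjensen
    refine hjensen.trans ?_
    have hbound : ∀ a ∈ t, w a • φ x (u a) ≤ w a * (sInf (φ x '' Sk k) + δ) := by
      intro a ha
      rcases eq_or_lt_of_le (hψnn a x) with h0 | hpos
      · have hw0 : w a = 0 := by simp only [hwdef]; rw [← h0, zero_div]
        simp [hw0]
      · have hd : dist x a < ε := by
          have : 0 < ε/2 - dist x a := by
            by_contra hcon
            push_neg at hcon
            have : ψ a x = 0 := max_eq_right (by linarith)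
            exact absurd this (ne_of_gt hpos)
          linarith
        have := huP a (htA a ha) x hd
        simp only [smul_eq_mul]
        exact mul_le_mul_of_nonneg_left this (hwnn a ha)
    calc ∑ a ∈ t, w a • φ x (u a) ≤ ∑ a ∈ t, w a * (sInf (φ x '' Sk k) + δ) :=
          Finset.sum_le_sum hbound
      _ = (∑ a ∈ t, w a) * (sInf (φ x '' Sk k) + δ) := by rw [Finset.sum_mul]
      _ = sInf (φ x '' Sk k) + δ := by rw [hwsum, one_mul]
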